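/- Let S be a zero-sum sequence over a subset G_P of an abelian group and U an atom of the monoid B(G_P) of zero-sum sequences. Then the maximum length of a factorization of SU into atoms of B(G_P) is at most |S| + 1, where |S| is the number of terms of S. -/

import Mathlib

def ZeroSumOver {G : Type*} [AddCommGroup G] (GP : Set G) :
    Submonoid (Multiplicative (Multiset G)) where
  carrier := {s | (Multiplicative.toAdd s).sum = 0 ∧ ∀ g ∈ Multiplicative.toAdd s, g ∈ GP}
  one_mem' := by
    constructor
    · simp
    · intro g hg
      simp only [toAdd_one] at hg
      exact absurd hg (Multiset.notMem_zero g)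
  mul_mem' := by
    intro a b ha hb
    refine ⟨?_, ?_⟩
    · have : (Multiplicative.toAdd (a * b)) = Multiplicative.toAdd a + Multiplicative.toAdd b :=
        rfl
      rw [this, Multiset.sum_add, ha.1, hb.1, add_zero]
    · intro g hg
      have : (Multiplicative.toAdd (a * b)) = Multiplicative.toAdd a + Multiplicative.toAdd b :=
        rfl
      rw [this, Multiset.mem_add] at hg
      rcases hg with hg | hg
      · exact ha.2 g hg
      · exact hb.2 g hg

def LengthSet {M : Type*} [Monoid M] (a : M) : Set ℕ :=
  {n | ∃ (ε : Mˣ) (L : List M), L.length = n ∧ (∀ x ∈ L, Irreducible x) ∧ a = ε * L.prod}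

section helper
open Multiplicative
variable {G : Type*} [AddCommGroup G] {GP : Set G}

/-- multiset underlying an element of the submonoid -/
private def mm (x : ZeroSumOver GP) : Multiset G := toAdd (x : Multiplicative (Multiset G))

private lemma mm_mul (a b : ZeroSumOver GP) : mm (a * b) = mm a + mm b := rfl

private lemma mm_inj {a b : ZeroSumOver GP} (h : mm a = mm b) : a = b := by
  apply Subtype.ext
  exact toAdd.injective h

private lemma mm_one : mm (1 : ZeroSumOver GP) = 0 := rfl

private lemma eq_one_of_mm_eq_zero {a : ZeroSumOver GP} (h : mm a = 0) : a = 1 :=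
  mm_inj (h.trans mm_one.symm)

private lemma unit_eq_one (ε : (ZeroSumOver GP)ˣ) : (ε : ZeroSumOver GP) = 1 := by
  have h : mm ((ε : ZeroSumOver GP) * ((ε⁻¹ : (ZeroSumOver GP)ˣ) : ZeroSumOver GP)) = mm (1 : ZeroSumOver GP) := by
    rw [ε.mul_inv]
  rw [mm_mul, mm_one] at h
  have h1 : mm (ε : ZeroSumOver GP) = 0 := by
    have := congrArg Multiset.card h
    simp at this
    exact this.1
  exact eq_one_of_mm_eq_zero h1

private lemma mm_ne_zero_of_irreducible {x : ZeroSumOver GP} (hx : Irreducible x) : mm x ≠ 0 := by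
  intro h
  exact hx.not_isUnit ((eq_one_of_mm_eq_zero h) ▸ isUnit_one)

/-- atom property in multiset language -/
private lemma atom_subsum {U : ZeroSumOver GP} (hU : Irreducible U)
    {t : Multiset G} (ht : t ≤ mm U) (hsum : t.sum = 0) (hne : t ≠ 0) : t = mm U := by
  haveI := Classical.decEq G
  set r := mm U - t with hr_def
  have hr : t + r = mm U := add_tsub_cancel_of_le ht
  have hrle : r ≤ mm U := tsub_le_self
  have hUsum : (mm U).sum = 0 := U.2.1
  have hrsum : r.sum = 0 := by
    have := congrArg Multiset.sum hr
    rw [Multiset.sum_add, hsum, zero_add, hUsum] at this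
    exact this
  have hT : (Multiplicative.ofAdd t) ∈ ZeroSumOver GP :=
    ⟨hsum, fun g hg => U.2.2 g (Multiset.mem_of_le ht hg)⟩
  have hR : (Multiplicative.ofAdd r) ∈ ZeroSumOver GP :=
    ⟨hrsum, fun g hg => U.2.2 g (Multiset.mem_of_le hrle hg)⟩
  have hfac : U = (⟨_, hT⟩ : ZeroSumOver GP) * ⟨_, hR⟩ := by
    apply mm_inj
    rw [mm_mul]
    exact hr.symm
  rcases hU.isUnit_or_isUnit hfac with h | h
  · exfalso
    obtain ⟨u, hu⟩ := h
    have h1 : (⟨Multiplicative.ofAdd t, hT⟩ : ZeroSumOver GP) = 1 := hu ▸ unit_eq_one u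
    exact hne (congrArg mm h1)
  · obtain ⟨u, hu⟩ := h
    have h1 : (⟨Multiplicative.ofAdd r, hR⟩ : ZeroSumOver GP) = 1 := hu ▸ unit_eq_one u
    have hr0 : r = 0 := congrArg mm h1
    rw [hr0, add_zero] at hr
    exact hr

private lemma inter_add_sub_eq {G : Type*} [DecidableEq G] (a u : Multiset G) :
    a ∩ u + (a - u) = a := by
  ext g
  simp only [Multiset.count_add, Multiset.count_inter, Multiset.count_sub]
  omega

/-- split a submultiset of a list sum along the list -/
private lemma exists_split (L : List (Multiset G)) (a : Multiset G) (ha : a ≤ L.sum) :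
    ∃ p : List (Multiset G × Multiset G), p.map (fun q => q.1 + q.2) = L ∧
      (p.map Prod.fst).sum = a := by
  haveI := Classical.decEq G
  induction L generalizing a with
  | nil =>
      refine ⟨[], by simp, ?_⟩
      simp only [List.map_nil, List.sum_nil]
      exact (le_antisymm (by simpa using ha) (Multiset.zero_le a)).symm
  | cons u rest ih =>
      have h2 : a - u ≤ rest.sum := by
        rw [tsub_le_iff_left]
        simpa [List.sum_cons] using ha
      obtain ⟨p, hp1, hp2⟩ := ih _ h2
      refine ⟨(a ∩ u, u - a ∩ u) :: p, ?_, ?_⟩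
      · simp only [List.map_cons, hp1, List.cons.injEq, and_true]
        exact add_tsub_cancel_of_le (Multiset.inter_le_right (s := a) (t := u))
      · simp only [List.map_cons, List.sum_cons, hp2]
        exact inter_add_sub_eq a u

private lemma sum_map_add (p : List (Multiset G × Multiset G)) :
    (p.map (fun q => q.1 + q.2)).sum = (p.map Prod.fst).sum + (p.map Prod.snd).sum := by
  induction p with
  | nil => simp
  | cons q p ih =>
      simp only [List.map_cons, List.sum_cons, ih]
      abel

private lemma card_list_sum (L : List (Multiset G)) :
    Multiset.card L.sum = (L.map (fun s => Multiset.card s)).sum := by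
  induction L with
  | nil => simp
  | cons u rest ih => simp [ih]

private lemma len_le_of_fst_ne_zero (p : List (Multiset G × Multiset G))
    (h : ∀ q ∈ p, q.1 ≠ 0) :
    p.length ≤ (p.map (fun q => Multiset.card q.1)).sum := by
  induction p with
  | nil => simp
  | cons q p ih =>
      simp only [List.length_cons, List.map_cons, List.sum_cons]
      have h1 : 1 ≤ Multiset.card q.1 := Multiset.card_pos.2 (h q (by simp))
      have h2 := ih (fun q hq => h q (by simp [hq]))
      omega

private lemma count_lemma {mU : Multiset G} (hU : mU ≠ 0) (p : List (Multiset G × Multiset G))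
    (h : ∀ q ∈ p, q.1 = 0 → q.2 = mU)
    (hsnd : (p.map Prod.snd).sum ≤ mU) :
    p.length ≤ (p.map (fun q => Multiset.card q.1)).sum + 1 := by
  induction p with
  | nil => simp
  | cons q p ih =>
      simp only [List.length_cons, List.map_cons, List.sum_cons]
      by_cases hq : q.1 = 0
      · -- q.2 = mU ; rest of snd sum is 0
        have hq2 : q.2 = mU := h q (by simp) hq
        have hrest : (p.map Prod.snd).sum = 0 := by
          have : mU + (p.map Prod.snd).sum ≤ mU + 0 := by
            simpa [List.map_cons, List.sum_cons, hq2, add_zero] using hsnd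
          have := le_of_add_le_add_left this
          exact le_antisymm this (Multiset.zero_le _)
        have hne : ∀ q' ∈ p, q'.1 ≠ 0 := by
          intro q' hq' hq'0
          have hq'2 : q'.2 = mU := h q' (by simp [hq']) hq'0
          have hle : q'.2 ≤ (p.map Prod.snd).sum :=
            List.single_le_sum (fun x _ => Multiset.zero_le x) _
              (List.mem_map_of_mem (f := Prod.snd) hq')
          rw [hq'2, hrest] at hle
          exact hU (le_antisymm hle (Multiset.zero_le _))
        have := len_le_of_fst_ne_zero p hne
        omega
      · have hsnd' : (p.map Prod.snd).sum ≤ mU := by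
          refine le_trans ?_ hsnd
          simp only [List.map_cons, List.sum_cons]
          exact le_add_self
        have := ih (fun q' hq' => h q' (by simp [hq'])) hsnd'
        have h1 : 1 ≤ Multiset.card q.1 := Multiset.card_pos.2 hq
        omega

private lemma mm_list_prod (L : List (ZeroSumOver GP)) :
    mm L.prod = (L.map mm).sum := by
  induction L with
  | nil => rfl
  | cons x L ih => rw [List.prod_cons, mm_mul, ih, List.map_cons, List.sum_cons]

end helper

/-- If `S` is a zero-sum sequence over `G_P` and `U` an atom of `B(G_P)`, then every
factorization length of `S·U` is at most `|S| + 1`. -/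
theorem stmt12 {G : Type*} [AddCommGroup G] (GP : Set G)
    (S U : ZeroSumOver GP) (hU : Irreducible U) :
    ∀ n ∈ LengthSet (S * U),
      n ≤ Multiset.card (Multiplicative.toAdd (S : Multiplicative (Multiset G))) + 1 := by
  rintro n ⟨ε, L, hlen, hirr, heq⟩
  rw [unit_eq_one ε, one_mul] at heq
  -- pass to multisets
  have hsum : ((L.map mm).sum : Multiset G) = mm S + mm U := by
    rw [← mm_list_prod, ← heq, mm_mul]
  have hSle : mm S ≤ (L.map mm).sum := hsum.symm ▸ le_self_add
  obtain ⟨p, hp1, hp2⟩ := exists_split (L.map mm) (mm S) hSle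
  have hsnd : (p.map Prod.snd).sum = mm U := by
    have h1 := sum_map_add p
    rw [hp1, hsum, hp2] at h1
    exact (add_left_cancel h1).symm
  have hcond : ∀ q ∈ p, q.1 = 0 → q.2 = mm U := by
    intro q hq hq1
    have hmem : q.1 + q.2 ∈ L.map mm := by
      rw [← hp1]
      exact List.mem_map_of_mem hq
    obtain ⟨x, hxL, hx⟩ := List.mem_map.mp hmem
    have hq2 : q.2 = mm x := by rw [hx, hq1, zero_add]
    have hle : q.2 ≤ mm U := by
      rw [← hsnd]
      exact List.single_le_sum (fun x _ => Multiset.zero_le x) _ (List.mem_map_of_mem (f := Prod.snd) hq)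
    have hs : q.2.sum = 0 := by rw [hq2]; exact x.2.1
    have hn : q.2 ≠ 0 := by rw [hq2]; exact mm_ne_zero_of_irreducible (hirr x hxL)
    exact atom_subsum hU hle hs hn
  have hkey := count_lemma (mm_ne_zero_of_irreducible hU) p hcond hsnd.le
  have hcard : (p.map (fun q => Multiset.card q.1)).sum
      = Multiset.card (Multiplicative.toAdd (S : Multiplicative (Multiset G))) := by
    have h := card_list_sum (p.map Prod.fst)
    rw [hp2, List.map_map] at h
    exact h.symm
  have hlenp : p.length = n := by
    have := congrArg List.length hp1
    simpa [hlen] using this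
  rw [← hlenp, ← hcard]
  exact hkey
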